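/- Let D ∈ ℝ^{N×N} be a diagonal matrix with strictly positive diagonal entries, λ₂ > 0, μ₁ > 0, μ₂ > 0, X ∈ ℝ^{N×d}, E, Λ₁ ∈ ℝ^{N×d}, L̃₀ ∈ ℝ^{N×N}, and let W_1,…,W_m ∈ ℝ^{N×N} satisfy Σ_{j=1}^m W_jᵀW_j = I, with Q_j, Λ_{2,j} ∈ ℝ^{N×d}. Then the matrix λ₂D + μ₁L̃₀ᵀL̃₀ + μ₂I is invertible, and the function U ↦ (λ₂/2)tr((U−X)ᵀD(U−X)) + (μ₁/2)‖L̃₀U − E‖_F² + tr(Λ₁ᵀ(L̃₀U − E)) + Σ_j (μ₂/2)‖Q_j − W_jU‖_F² + Σ_j tr(Λ_{2,j}ᵀ(Q_j − W_jU)) has the unique global minimizer U = (λ₂D + μ₁L̃₀ᵀL̃₀ + μ₂I)⁻¹ (λ₂DX + μ₁L̃₀ᵀE − L̃₀ᵀΛ₁ + Σ_j W_jᵀ(μ₂Q_j + Λ_{2,j})). -/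

import Mathlib

open Matrix BigOperators

/-- Squared Frobenius norm of a real matrix. -/
noncomputable def frobSq {m n : ℕ} (M : Matrix (Fin m) (Fin n) ℝ) : ℝ :=
  ∑ i, ∑ j, (M i j) ^ 2

/-! ### Auxiliary trace inner product toolkit -/

/-- Trace inner product `⟨A, B⟩ = tr(Aᵀ B)`. -/
noncomputable def mip {n d : ℕ} (A B : Matrix (Fin n) (Fin d) ℝ) : ℝ := Matrix.trace (Aᵀ * B)

lemma mip_eq_sum {n d : ℕ} (A B : Matrix (Fin n) (Fin d) ℝ) :
    mip A B = ∑ i, ∑ j, A i j * B i j := by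
  unfold mip
  rw [Matrix.trace]
  simp only [Matrix.diag_apply, Matrix.mul_apply, Matrix.transpose_apply]
  rw [Finset.sum_comm]

lemma mip_comm {n d : ℕ} (A B : Matrix (Fin n) (Fin d) ℝ) : mip A B = mip B A := by
  simp only [mip_eq_sum, mul_comm]

lemma mip_add_right {n d : ℕ} (A B C : Matrix (Fin n) (Fin d) ℝ) :
    mip A (B + C) = mip A B + mip A C := by
  simp [mip_eq_sum, Matrix.add_apply, mul_add, Finset.sum_add_distrib]

lemma mip_sub_right {n d : ℕ} (A B C : Matrix (Fin n) (Fin d) ℝ) :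
    mip A (B - C) = mip A B - mip A C := by
  simp [mip_eq_sum, Matrix.sub_apply, mul_sub, Finset.sum_sub_distrib]

lemma mip_smul_right {n d : ℕ} (c : ℝ) (A B : Matrix (Fin n) (Fin d) ℝ) :
    mip A (c • B) = c * mip A B := by
  simp [mip_eq_sum, Matrix.smul_apply, Finset.mul_sum]; ring_nf
  simp [mul_comm, mul_left_comm]

lemma mip_add_left {n d : ℕ} (A B C : Matrix (Fin n) (Fin d) ℝ) :
    mip (A + B) C = mip A C + mip B C := by
  rw [mip_comm, mip_add_right, mip_comm C A, mip_comm C B]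

lemma mip_sub_left {n d : ℕ} (A B C : Matrix (Fin n) (Fin d) ℝ) :
    mip (A - B) C = mip A C - mip B C := by
  rw [mip_comm, mip_sub_right, mip_comm C A, mip_comm C B]

lemma mip_sum_right {n d m : ℕ} (A : Matrix (Fin n) (Fin d) ℝ)
    (B : Fin m → Matrix (Fin n) (Fin d) ℝ) :
    mip A (∑ j, B j) = ∑ j, mip A (B j) := by
  simp only [mip_eq_sum, Matrix.sum_apply, Finset.mul_sum]
  rw [Finset.sum_comm (γ := Fin m)]
  refine Finset.sum_congr rfl fun i _ => ?_
  rw [Finset.sum_comm (γ := Fin m)]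

lemma mip_mul_left {n d : ℕ} (C : Matrix (Fin n) (Fin n) ℝ) (A B : Matrix (Fin n) (Fin d) ℝ) :
    mip (C * A) B = mip A (Cᵀ * B) := by
  unfold mip
  rw [Matrix.transpose_mul, Matrix.mul_assoc]

lemma frobSq_mip {n d : ℕ} (A : Matrix (Fin n) (Fin d) ℝ) : frobSq A = mip A A := by
  simp [frobSq, mip_eq_sum, sq]

lemma mip_self_nonneg {n d : ℕ} (A : Matrix (Fin n) (Fin d) ℝ) : 0 ≤ mip A A := by
  rw [← frobSq_mip]
  unfold frobSq
  positivity

lemma mip_self_pos {n d : ℕ} (A : Matrix (Fin n) (Fin d) ℝ) (hA : A ≠ 0) : 0 < mip A A := by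
  rw [← frobSq_mip]
  unfold frobSq
  rcases lt_or_eq_of_le (show (0:ℝ) ≤ ∑ i, ∑ j, (A i j)^2 by positivity) with h | h
  · exact h
  · exfalso; apply hA
    ext i j
    have h1 : ∀ i ∈ Finset.univ, (0:ℝ) ≤ ∑ j, (A i j)^2 := fun i _ => by positivity
    have h2 := (Finset.sum_eq_zero_iff_of_nonneg h1).mp h.symm i (Finset.mem_univ i)
    have h3 := (Finset.sum_eq_zero_iff_of_nonneg
      (fun j _ => by positivity : ∀ j ∈ Finset.univ, (0:ℝ) ≤ (A i j)^2)).mp h2 j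
      (Finset.mem_univ j)
    simpa using pow_eq_zero_iff (n := 2) (by norm_num) |>.mp h3

lemma mip_symm_mat {n d : ℕ} (C : Matrix (Fin n) (Fin n) ℝ) (hC : Cᵀ = C)
    (A B : Matrix (Fin n) (Fin d) ℝ) : mip A (C * B) = mip B (C * A) := by
  rw [← hC, ← mip_mul_left, hC, mip_comm]

lemma mip_diag_nonneg {n d : ℕ} (dv : Fin n → ℝ) (hdv : ∀ i, 0 ≤ dv i)
    (A : Matrix (Fin n) (Fin d) ℝ) : 0 ≤ mip A (Matrix.diagonal dv * A) := by
  rw [mip_eq_sum]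
  refine Finset.sum_nonneg fun i _ => Finset.sum_nonneg fun j _ => ?_
  have : A i j * ((Matrix.diagonal dv * A) i j) = dv i * (A i j)^2 := by
    rw [Matrix.diagonal_mul]; ring
  rw [this]
  exact mul_nonneg (hdv i) (sq_nonneg _)

/-- Positive smul of a PosDef matrix is PosDef. -/
lemma posDef_smul_real {n : ℕ} {c : ℝ} {A : Matrix (Fin n) (Fin n) ℝ}
    (hc : 0 < c) (hA : A.PosDef) : (c • A).PosDef := by
  refine ⟨?_, fun x hx => ?_⟩
  · unfold Matrix.IsHermitian
    rw [Matrix.conjTranspose_smul, hA.1]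
    simp
  · exact (hA.smul hc).2 hx

/-- Nonneg smul of a PosSemidef matrix is PosSemidef. -/
lemma posSemidef_smul_real {n : ℕ} {c : ℝ} {A : Matrix (Fin n) (Fin n) ℝ}
    (hc : 0 ≤ c) (hA : A.PosSemidef) : (c • A).PosSemidef := by
  refine ⟨?_, fun x => ?_⟩
  · unfold Matrix.IsHermitian
    rw [Matrix.conjTranspose_smul, hA.1]
    simp
  · exact (hA.smul hc).2 x

/-- The quadratic expansion of the DoT objective. -/
lemma quad_expand {N d m : ℕ} (dv : Fin N → ℝ) (lam2 μ₁ μ₂ : ℝ)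
    (X E Λ₁ : Matrix (Fin N) (Fin d) ℝ) (L₀ : Matrix (Fin N) (Fin N) ℝ)
    (W : Fin m → Matrix (Fin N) (Fin N) ℝ) (hW : ∑ j, (W j)ᵀ * W j = 1)
    (Q Λ₂ : Fin m → Matrix (Fin N) (Fin d) ℝ) (U : Matrix (Fin N) (Fin d) ℝ) :
    (lam2 / 2) * Matrix.trace ((U - X)ᵀ * (Matrix.diagonal dv) * (U - X))
      + (μ₁ / 2) * frobSq (L₀ * U - E)
      + Matrix.trace (Λ₁ᵀ * (L₀ * U - E))
      + (∑ j, (μ₂ / 2) * frobSq (Q j - W j * U))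
      + (∑ j, Matrix.trace ((Λ₂ j)ᵀ * (Q j - W j * U)))
    = (1/2) * mip U ((lam2 • (Matrix.diagonal dv) + μ₁ • (L₀ᵀ * L₀)
          + μ₂ • (1 : Matrix (Fin N) (Fin N) ℝ)) * U)
      - mip U (lam2 • ((Matrix.diagonal dv) * X) + μ₁ • (L₀ᵀ * E) - L₀ᵀ * Λ₁
              + ∑ j, (W j)ᵀ * (μ₂ • Q j + Λ₂ j))
      + ((lam2/2) * mip X ((Matrix.diagonal dv) * X) + (μ₁/2) * mip E E - mip Λ₁ E
          + ∑ j, ((μ₂/2) * mip (Q j) (Q j) + mip (Λ₂ j) (Q j))) := by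
  set D : Matrix (Fin N) (Fin N) ℝ := Matrix.diagonal dv with hDdef
  have hD : Dᵀ = D := Matrix.diagonal_transpose dv
  -- term 1
  have t1 : Matrix.trace ((U - X)ᵀ * D * (U - X))
      = mip U (D * U) - 2 * mip U (D * X) + mip X (D * X) := by
    have h0 : Matrix.trace ((U - X)ᵀ * D * (U - X)) = mip (U - X) (D * (U - X)) := by
      unfold mip; rw [Matrix.mul_assoc]
    rw [h0, Matrix.mul_sub, mip_sub_left, mip_sub_right, mip_sub_right,
      mip_symm_mat D hD X U]
    ring
  -- term 2
  have t2 : frobSq (L₀ * U - E)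
      = mip U ((L₀ᵀ * L₀) * U) - 2 * mip U (L₀ᵀ * E) + mip E E := by
    rw [frobSq_mip, mip_sub_left, mip_sub_right, mip_sub_right,
      mip_comm E (L₀ * U), mip_mul_left L₀ U (L₀ * U), ← Matrix.mul_assoc,
      mip_mul_left L₀ U E]
    ring
  -- term 3
  have t3 : Matrix.trace (Λ₁ᵀ * (L₀ * U - E)) = mip U (L₀ᵀ * Λ₁) - mip Λ₁ E := by
    show mip Λ₁ (L₀ * U - E) = _
    rw [mip_sub_right, mip_comm Λ₁ (L₀ * U), mip_mul_left]
  -- term 4, per j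
  have t4 : ∀ j, frobSq (Q j - W j * U)
      = mip (Q j) (Q j) - 2 * mip U ((W j)ᵀ * Q j) + mip U (((W j)ᵀ * W j) * U) := by
    intro j
    rw [frobSq_mip, mip_sub_left, mip_sub_right, mip_sub_right,
      mip_comm (Q j) (W j * U), mip_mul_left (W j) U (W j * U), ← Matrix.mul_assoc,
      mip_mul_left (W j) U (Q j)]
    ring
  -- term 5, per j
  have t5 : ∀ j, Matrix.trace ((Λ₂ j)ᵀ * (Q j - W j * U))
      = mip (Λ₂ j) (Q j) - mip U ((W j)ᵀ * Λ₂ j) := by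
    intro j
    show mip (Λ₂ j) (Q j - W j * U) = _
    rw [mip_sub_right, mip_comm (Λ₂ j) (W j * U), mip_mul_left]
  -- frame sum
  have hframe : ∑ j, mip U (((W j)ᵀ * W j) * U) = mip U U := by
    rw [← mip_sum_right, ← Matrix.sum_mul, hW, Matrix.one_mul]
  -- sum of term 4
  have s4 : (∑ j, (μ₂ / 2) * frobSq (Q j - W j * U))
      = (∑ j, (μ₂/2) * mip (Q j) (Q j)) - μ₂ * (∑ j, mip U ((W j)ᵀ * Q j))
        + (μ₂/2) * mip U U := by
    have : (∑ j, (μ₂ / 2) * frobSq (Q j - W j * U))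
        = ∑ j, ((μ₂/2) * mip (Q j) (Q j) - μ₂ * mip U ((W j)ᵀ * Q j)
            + (μ₂/2) * mip U (((W j)ᵀ * W j) * U)) := by
      refine Finset.sum_congr rfl fun j _ => ?_
      rw [t4 j]; ring
    rw [this]
    rw [Finset.sum_add_distrib, Finset.sum_sub_distrib, ← Finset.mul_sum,
      ← Finset.mul_sum, ← Finset.mul_sum, hframe]
  -- sum of term 5
  have s5 : (∑ j, Matrix.trace ((Λ₂ j)ᵀ * (Q j - W j * U)))
      = (∑ j, mip (Λ₂ j) (Q j)) - (∑ j, mip U ((W j)ᵀ * Λ₂ j)) := by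
    rw [← Finset.sum_sub_distrib]
    exact Finset.sum_congr rfl fun j _ => t5 j
  -- expansion of the linear term
  have hB : mip U (lam2 • (D * X) + μ₁ • (L₀ᵀ * E) - L₀ᵀ * Λ₁
        + ∑ j, (W j)ᵀ * (μ₂ • Q j + Λ₂ j))
      = lam2 * mip U (D * X) + μ₁ * mip U (L₀ᵀ * E) - mip U (L₀ᵀ * Λ₁)
        + μ₂ * (∑ j, mip U ((W j)ᵀ * Q j)) + (∑ j, mip U ((W j)ᵀ * Λ₂ j)) := by
    rw [mip_add_right, mip_sub_right, mip_add_right, mip_smul_right, mip_smul_right,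
      mip_sum_right]
    have : ∑ j, mip U ((W j)ᵀ * (μ₂ • Q j + Λ₂ j))
        = ∑ j, (μ₂ * mip U ((W j)ᵀ * Q j) + mip U ((W j)ᵀ * Λ₂ j)) := by
      refine Finset.sum_congr rfl fun j _ => ?_
      rw [Matrix.mul_add, Matrix.mul_smul, mip_add_right, mip_smul_right]
    rw [this, Finset.sum_add_distrib, ← Finset.mul_sum]
    ring
  -- expansion of the quadratic term
  have hQuad : mip U ((lam2 • D + μ₁ • (L₀ᵀ * L₀) + μ₂ • (1 : Matrix (Fin N) (Fin N) ℝ)) * U)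
      = lam2 * mip U (D * U) + μ₁ * mip U ((L₀ᵀ * L₀) * U) + μ₂ * mip U U := by
    rw [Matrix.add_mul, Matrix.add_mul, Matrix.smul_mul, Matrix.smul_mul, Matrix.smul_mul,
      Matrix.one_mul, mip_add_right, mip_add_right, mip_smul_right, mip_smul_right,
      mip_smul_right]
  -- split the constant sum
  have hconst : (∑ j, ((μ₂/2) * mip (Q j) (Q j) + mip (Λ₂ j) (Q j)))
      = (∑ j, (μ₂/2) * mip (Q j) (Q j)) + (∑ j, mip (Λ₂ j) (Q j)) :=
    Finset.sum_add_distrib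
  rw [t1, t2, t3, s4, s5, hB, hQuad, hconst]
  ring

/-- U-update of the full DoT ADMM scheme: with a positive diagonal `D = diagonal dv`,
`λ₂, μ₁, μ₂ > 0`, and tight-frame operators `Wⱼ` (with `∑ⱼ Wⱼᵀ Wⱼ = I`), the matrix
`λ₂D + μ₁L₀ᵀL₀ + μ₂I` is invertible and the function
`U ↦ (λ₂/2)tr((U−X)ᵀD(U−X)) + (μ₁/2)‖L₀U − E‖_F² + tr(Λ₁ᵀ(L₀U − E))
     + ∑ⱼ (μ₂/2)‖Qⱼ − WⱼU‖_F² + ∑ⱼ tr(Λ₂ⱼᵀ(Qⱼ − WⱼU))`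
has the unique global minimizer
`U = (λ₂D + μ₁L₀ᵀL₀ + μ₂I)⁻¹ (λ₂DX + μ₁L₀ᵀE − L₀ᵀΛ₁ + ∑ⱼ Wⱼᵀ(μ₂Qⱼ + Λ₂ⱼ))`. -/
theorem stmt11 {N d m : ℕ} (dv : Fin N → ℝ) (hdv : ∀ i, 0 < dv i)
    (lam2 μ₁ μ₂ : ℝ) (hlam2 : 0 < lam2) (hμ₁ : 0 < μ₁) (hμ₂ : 0 < μ₂)
    (X E Λ₁ : Matrix (Fin N) (Fin d) ℝ) (L₀ : Matrix (Fin N) (Fin N) ℝ)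
    (W : Fin m → Matrix (Fin N) (Fin N) ℝ) (hW : ∑ j, (W j)ᵀ * W j = 1)
    (Q Λ₂ : Fin m → Matrix (Fin N) (Fin d) ℝ) :
    let D : Matrix (Fin N) (Fin N) ℝ := Matrix.diagonal dv
    let M : Matrix (Fin N) (Fin N) ℝ :=
      lam2 • D + μ₁ • (L₀ᵀ * L₀) + μ₂ • (1 : Matrix (Fin N) (Fin N) ℝ)
    let f : Matrix (Fin N) (Fin d) ℝ → ℝ := fun U =>
      (lam2 / 2) * Matrix.trace ((U - X)ᵀ * D * (U - X))
        + (μ₁ / 2) * frobSq (L₀ * U - E)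
        + Matrix.trace (Λ₁ᵀ * (L₀ * U - E))
        + (∑ j, (μ₂ / 2) * frobSq (Q j - W j * U))
        + (∑ j, Matrix.trace ((Λ₂ j)ᵀ * (Q j - W j * U)))
    let Ustar : Matrix (Fin N) (Fin d) ℝ :=
      M⁻¹ * (lam2 • (D * X) + μ₁ • (L₀ᵀ * E) - L₀ᵀ * Λ₁
              + ∑ j, (W j)ᵀ * (μ₂ • Q j + Λ₂ j))
    IsUnit M ∧ ∀ U : Matrix (Fin N) (Fin d) ℝ, U ≠ Ustar → f Ustar < f U := by
  intro D M f Ustar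
  -- positive definiteness of M
  have hDpd : D.PosDef := Matrix.posDef_diagonal_iff.mpr hdv
  have hL : (L₀ᵀ * L₀).PosSemidef := by
    have := Matrix.posSemidef_conjTranspose_mul_self (R := ℝ) L₀
    simpa using this
  have hMpd : M.PosDef := by
    have h1 : (lam2 • D).PosDef := posDef_smul_real hlam2 hDpd
    have h2 : (μ₁ • (L₀ᵀ * L₀)).PosSemidef := posSemidef_smul_real hμ₁.le hL
    have h3 : (μ₂ • (1 : Matrix (Fin N) (Fin N) ℝ)).PosDef :=
      posDef_smul_real hμ₂ Matrix.PosDef.one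
    exact (h1.add_posSemidef h2).add h3
  have hUnit : IsUnit M := hMpd.isUnit
  refine ⟨hUnit, fun U hU => ?_⟩
  have hdet : IsUnit M.det := (Matrix.isUnit_iff_isUnit_det M).mp hUnit
  set B : Matrix (Fin N) (Fin d) ℝ :=
    lam2 • (D * X) + μ₁ • (L₀ᵀ * E) - L₀ᵀ * Λ₁ + ∑ j, (W j)ᵀ * (μ₂ • Q j + Λ₂ j) with hBdef
  have hMUs : M * Ustar = B := Matrix.mul_nonsing_inv_cancel_left M B hdet
  -- symmetry of M
  have hMsymm : Mᵀ = M := by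
    show (lam2 • D + μ₁ • (L₀ᵀ * L₀) + μ₂ • (1 : Matrix (Fin N) (Fin N) ℝ))ᵀ = _
    rw [Matrix.transpose_add, Matrix.transpose_add, Matrix.transpose_smul,
      Matrix.transpose_smul, Matrix.transpose_smul, Matrix.transpose_mul,
      Matrix.transpose_transpose, Matrix.transpose_one]
    show lam2 • Dᵀ + _ + _ = _
    rw [Matrix.diagonal_transpose]
  -- quadratic expansion of f
  have hf : ∀ V : Matrix (Fin N) (Fin d) ℝ, f V
      = (1/2) * mip V (M * V) - mip V B
        + ((lam2/2) * mip X (D * X) + (μ₁/2) * mip E E - mip Λ₁ E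
          + ∑ j, ((μ₂/2) * mip (Q j) (Q j) + mip (Λ₂ j) (Q j))) := fun V =>
    quad_expand dv lam2 μ₁ μ₂ X E Λ₁ L₀ W hW Q Λ₂ V
  -- difference identity
  set V : Matrix (Fin N) (Fin d) ℝ := U - Ustar with hVdef
  have hVne : V ≠ 0 := sub_ne_zero_of_ne hU
  have hdiff : f U - f Ustar = (1/2) * mip V (M * V) := by
    rw [hf U, hf Ustar]
    have e1 : mip V (M * V) = mip U (M * U) - mip U (M * Ustar) - mip Ustar (M * U)
        + mip Ustar (M * Ustar) := by
      rw [hVdef, Matrix.mul_sub, mip_sub_left, mip_sub_right, mip_sub_right]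
      ring
    have e2 : mip Ustar (M * U) = mip U (M * Ustar) := mip_symm_mat M hMsymm Ustar U
    have e3 : mip U (M * Ustar) = mip U B := by rw [hMUs]
    have e4 : mip Ustar (M * Ustar) = mip Ustar B := by rw [hMUs]
    rw [e1, e2, e3, e4]
    ring
  -- positivity of the quadratic form
  have hquadpos : 0 < mip V (M * V) := by
    have hexp : mip V (M * V)
        = lam2 * mip V (D * V) + μ₁ * mip (L₀ * V) (L₀ * V) + μ₂ * mip V V := by
      show mip V ((lam2 • D + μ₁ • (L₀ᵀ * L₀) + μ₂ • (1 : Matrix (Fin N) (Fin N) ℝ)) * V) = _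
      rw [Matrix.add_mul, Matrix.add_mul, Matrix.smul_mul, Matrix.smul_mul, Matrix.smul_mul,
        Matrix.one_mul, mip_add_right, mip_add_right, mip_smul_right, mip_smul_right,
        mip_smul_right, mip_mul_left L₀ V (L₀ * V), ← Matrix.mul_assoc]
    rw [hexp]
    have p1 : 0 ≤ lam2 * mip V (D * V) :=
      mul_nonneg hlam2.le (mip_diag_nonneg dv (fun i => (hdv i).le) V)
    have p2 : 0 ≤ μ₁ * mip (L₀ * V) (L₀ * V) := mul_nonneg hμ₁.le (mip_self_nonneg _)
    have p3 : 0 < μ₂ * mip V V := mul_pos hμ₂ (mip_self_pos V hVne)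
    linarith
  rw [← sub_pos]
  have : 0 < f U - f Ustar := by rw [hdiff]; linarith
  linarith
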